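/- Let V be a 4-dimensional real inner product space with a compatible complex structure J, and let W be the space of trilinear forms α with α(x,y,z) = −α(x,z,y) = −α(x,Jy,Jz). Then any α ∈ W that is also fully antisymmetric in the sense α(x,y,z) = −α(y,x,z) for all x,y,z vanishes identically; i.e., the Gray–Hervella class W₁ is trivial in dimension 4. -/

import Mathlib

set_option maxHeartbeats 1000000


/-- Membership in the Gray–Hervella space `W`. -/
def GrayHervella.memW {V : Type*} [NormedAddCommGroup V] [InnerProductSpace ℝ V]
    (J : V →ₗ[ℝ] V) (α : V →ₗ[ℝ] V →ₗ[ℝ] V →ₗ[ℝ] ℝ) : Prop :=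
  ∀ x y z : V, α x y z = - α x z y ∧ α x y z = - α x (J y) (J z)

/-- On a 4-dimensional real inner product space with compatible complex
structure `J`, any `α ∈ W` which is antisymmetric in its first two arguments vanishes
identically; i.e. the Gray–Hervella class `W₁` is trivial in dimension 4. -/
theorem W1_trivial_dim_four
    {V : Type*} [NormedAddCommGroup V] [InnerProductSpace ℝ V] [FiniteDimensional ℝ V]
    (hdim : Module.finrank ℝ V = 4)
    (J : V →ₗ[ℝ] V) (hJ2 : ∀ x : V, J (J x) = -x)
    (hJinner : ∀ x y : V, (inner ℝ (J x) (J y) : ℝ) = inner ℝ x y)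
    (α : V →ₗ[ℝ] V →ₗ[ℝ] V →ₗ[ℝ] ℝ) (hα : GrayHervella.memW J α)
    (hanti : ∀ x y z : V, α x y z = - α y x z) :
    α = 0 := by
  have h23 : ∀ x y z : V, α x y z = - α x z y := fun x y z => (hα x y z).1
  have hJrel : ∀ x y z : V, α x y z = - α x (J y) (J z) := fun x y z => (hα x y z).2
  have hxx : ∀ x z : V, α x x z = 0 := fun x z => by have := hanti x x z; linarith
  have hyy : ∀ x y : V, α x y y = 0 := fun x y => by have := h23 x y y; linarith
  have hxyx : ∀ x y : V, α x y x = 0 := fun x y => by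
    have h1 := h23 x y x; rw [hxx x y] at h1; linarith
  -- key lemma A : α x y (J y) = 0
  have hA : ∀ x y : V, α x y (J y) = 0 := by
    intro x y
    have h1 := hJrel x y (J y)
    rw [hJ2 y] at h1
    have h2 : α x (J y) (-y) = - α x (J y) y := by simp
    have h3 := h23 x (J y) y
    linarith
  -- key lemma B : α x (J x) y = 0
  have hB : ∀ x y : V, α x (J x) y = 0 := by
    intro x y
    have h1 := hJrel x (J x) y
    rw [hJ2 x] at h1
    have h2 : α x (-x) (J y) = - α x x (J y) := by simp
    rw [h2, hxx x (J y)] at h1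
    linarith
  -- α x y (J x) = 0
  have hC : ∀ x y : V, α x y (J x) = 0 := by
    intro x y
    have h1 := h23 x y (J x)
    rw [hB x y] at h1
    linarith
  ext x y z
  show α x y z = 0
  by_cases hx0 : x = 0
  · subst hx0; simp
  by_cases hy : y ∈ Submodule.span ℝ ({x, J x} : Set V)
  · obtain ⟨a, b, hab⟩ := Submodule.mem_span_pair.mp hy
    rw [← hab]
    have : α x (a • x + b • J x) z = a * α x x z + b * α x (J x) z := by
      simp [map_add, map_smul]
    rw [this, hxx, hB]
    ring
  ·
    set v : Fin 4 → V := ![x, J x, y, J y] with hv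
    have hindep : LinearIndependent ℝ v := by
      rw [Fintype.linearIndependent_iff]
      intro g hg
      rw [Fin.sum_univ_four] at hg
      have hv0 : v 0 = x := rfl
      have hv1 : v 1 = J x := rfl
      have hv2 : v 2 = y := rfl
      have hv3 : v 3 = J y := rfl
      rw [hv0, hv1, hv2, hv3] at hg
      -- apply J
      have hg' : g 0 • J x + g 1 • (-x) + g 2 • J y + g 3 • (-y) = 0 := by
        have := congrArg J hg
        simpa [map_add, map_smul, hJ2] using this
      -- combine to isolate y
      have hyc : (g 2 ^ 2 + g 3 ^ 2) • y =
          (-(g 2 * g 0) - g 3 * g 1) • x + (g 3 * g 0 - g 2 * g 1) • J x := by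
        have e1 := congrArg (fun w => (g 2 : ℝ) • w) hg
        have e2 := congrArg (fun w => (g 3 : ℝ) • w) hg'
        have e3 : (g 2:ℝ) • (g 0 • x + g 1 • J x + g 2 • y + g 3 • J y)
            - (g 3:ℝ) • (g 0 • J x + g 1 • (-x) + g 2 • J y + g 3 • (-y)) = 0 := by
          rw [hg, hg']; simp
        have : (g 2 ^ 2 + g 3 ^ 2) • y - ((-(g 2 * g 0) - g 3 * g 1) • x + (g 3 * g 0 - g 2 * g 1) • J x) =
            (g 2:ℝ) • (g 0 • x + g 1 • J x + g 2 • y + g 3 • J y)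
            - (g 3:ℝ) • (g 0 • J x + g 1 • (-x) + g 2 • J y + g 3 • (-y)) := by
          module
        rw [e3] at this
        linear_combination (norm := module) this
      have h23z : g 2 = 0 ∧ g 3 = 0 := by
        by_contra hcon
        have hne : (g 2 ^ 2 + g 3 ^ 2 : ℝ) ≠ 0 := by
          rcases not_and_or.mp hcon with h | h <;> positivity
        apply hy
        have : y = ((g 2 ^ 2 + g 3 ^ 2)⁻¹ * (-(g 2 * g 0) - g 3 * g 1)) • x
            + ((g 2 ^ 2 + g 3 ^ 2)⁻¹ * (g 3 * g 0 - g 2 * g 1)) • J x := by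
          have := congrArg (fun w => ((g 2 ^ 2 + g 3 ^ 2 : ℝ))⁻¹ • w) hyc
          simp only [smul_smul, inv_mul_cancel₀ hne, one_smul, smul_add] at this
          simpa [mul_comm] using this
        rw [this]
        exact Submodule.add_mem _
          (Submodule.smul_mem _ _ (Submodule.subset_span (by simp)))
          (Submodule.smul_mem _ _ (Submodule.subset_span (by simp)))
      obtain ⟨h2z, h3z⟩ := h23z
      rw [h2z, h3z] at hg hg'
      simp only [zero_smul, add_zero] at hg hg'
      -- now g0 • x + g1 • Jx = 0 and g0 • Jx - g1 • x = 0
      have hxc : (g 0 ^ 2 + g 1 ^ 2) • x = 0 := by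
        have e3 : (g 0:ℝ) • (g 0 • x + g 1 • J x) - (g 1:ℝ) • (g 0 • J x + g 1 • (-x)) = 0 := by
          rw [hg, hg']; simp
        linear_combination (norm := module) e3
      have h01 : (g 0 ^ 2 + g 1 ^ 2 : ℝ) = 0 := by
        by_contra hne
        exact hx0 (by simpa [hne] using smul_eq_zero.mp hxc)
      have hg0 : g 0 = 0 := by nlinarith [sq_nonneg (g 0), sq_nonneg (g 1)]
      have hg1 : g 1 = 0 := by nlinarith [sq_nonneg (g 0), sq_nonneg (g 1)]
      intro i
      fin_cases i <;> simp [hg0, hg1, h2z, h3z]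
    have hspan := hindep.span_eq_top_of_card_eq_finrank (by simp [hdim])
    have hz : z ∈ Submodule.span ℝ (Set.range v) := hspan ▸ Submodule.mem_top
    obtain ⟨c, hc⟩ := (Submodule.mem_span_range_iff_exists_fun ℝ).mp hz
    rw [← hc, Fin.sum_univ_four]
    have hv0 : v 0 = x := rfl
    have hv1 : v 1 = J x := rfl
    have hv2 : v 2 = y := rfl
    have hv3 : v 3 = J y := rfl
    rw [hv0, hv1, hv2, hv3]
    have : α x y (c 0 • x + c 1 • J x + c 2 • y + c 3 • J y)
        = c 0 * α x y x + c 1 * α x y (J x) + c 2 * α x y y + c 3 * α x y (J y) := by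
      simp [map_add, map_smul]
    rw [this, hxyx, hC, hyy, hA]
    ring
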